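/- Let r ∈ ℚ be a value attained by a normalized Dedekind sum, i.e., there exist a ∈ ℤ, b ∈ ℕ with gcd(a,b)=1 and S(a,b) = r. Then there exists a sequence of pairs (aᵢ, bᵢ) with gcd(aᵢ, bᵢ) = 1, bᵢ → ∞ as i → ∞, and S(aᵢ, bᵢ) = r for all i ∈ ℕ. -/

import Mathlib

open Classical in
noncomputable def saw (x : ℝ) : ℝ :=
  if ∃ n : ℤ, x = (n : ℝ) then 0 else x - ⌊x⌋ - 1/2

noncomputable def dedekindSum (a : ℤ) (b : ℕ) : ℝ :=
  ∑ k ∈ Finset.Icc 1 b, saw ((k : ℝ) / b) * saw ((a : ℝ) * k / b)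

noncomputable def normDedekindSum (a : ℤ) (b : ℕ) : ℝ := 12 * dedekindSum a b

namespace DSum

open Finset

/-- The integer model of the Dedekind sum. -/
def Tsum (x : ℤ) (n : ℕ) : ℤ := ∑ k ∈ range n, (k : ℤ) * ((x * k) % (n : ℤ))

/- ## Generic sum helpers -/

lemma sum_range_add {M : Type*} [AddCommMonoid M] (f : ℕ → M) (n l : ℕ) :
    ∑ k ∈ range (n + l), f k = (∑ k ∈ range n, f k) + ∑ i ∈ range l, f (n + i) := by
  induction l with
  | zero => simp
  | succ l ih =>
      rw [Nat.add_succ, sum_range_succ, ih, sum_range_succ, add_assoc]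

lemma sum_range_mul {M : Type*} [AddCommMonoid M] (f : ℕ → M) (x y : ℕ) :
    ∑ k ∈ range (x * y), f k = ∑ t ∈ range y, ∑ i ∈ range x, f (x * t + i) := by
  induction y with
  | zero => simp
  | succ y ih =>
      rw [Nat.mul_succ, sum_range_add, ih, sum_range_succ]

/-- Master permutation lemma: for `gcd(a,b)=1`, the map `s ↦ (a(w+s)) % b` permutes
residues as `s` ranges over `range b`. -/
lemma emod_perm (a : ℤ) (b : ℕ) (hb : 0 < b) (hco : IsCoprime a (b : ℤ))
    (w : ℤ) (g : ℤ → ℤ) :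
    ∑ s ∈ range b, g ((a * (w + s)) % (b : ℤ)) = ∑ v ∈ range b, g (v : ℤ) := by
  obtain ⟨u, t, hut⟩ := hco
  have hbz : (0:ℤ) < (b:ℤ) := by exact_mod_cast hb
  have hbne : (b:ℤ) ≠ 0 := ne_of_gt hbz
  have key : ∀ x y : ℤ, (∃ d, y - x = (b:ℤ) * d) → 0 ≤ y → y < b → x % (b:ℤ) = y := by
    rintro x y ⟨d, hd⟩ hy0 hyb
    rw [show x = y + (b:ℤ) * (-d) by linarith, Int.add_mul_emod_self_left,
      Int.emod_eq_of_lt hy0 hyb]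
  refine sum_nbij' (i := fun s => ((a * (w + s)) % (b:ℤ)).toNat)
    (j := fun v => ((u * v - w) % (b:ℤ)).toNat) ?_ ?_ ?_ ?_ ?_
  · intro s hs
    have h0 := Int.emod_nonneg (a * (w + s)) hbne
    have h1 := Int.emod_lt_of_pos (a * (w + s)) hbz
    simp only [mem_range]; omega
  · intro v hv
    have h0 := Int.emod_nonneg (u * v - w) hbne
    have h1 := Int.emod_lt_of_pos (u * v - w) hbz
    simp only [mem_range]; omega
  · intro s hs
    simp only [mem_range] at hs
    have h0 := Int.emod_nonneg (a * (w + s)) hbne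
    have hcast : (((a * (w + s)) % (b:ℤ)).toNat : ℤ) = (a * (w + s)) % (b:ℤ) :=
      Int.toNat_of_nonneg h0
    have hmod : (u * (((a * (w + s)) % (b:ℤ)).toNat : ℤ) - w) % (b:ℤ) = ((s:ℕ) : ℤ) := by
      apply key
      · refine ⟨t * (w + s) + u * ((a * (w + s)) / (b:ℤ)), ?_⟩
        rw [hcast, Int.emod_def]
        linear_combination (-(w + (s:ℤ))) * hut
      · positivity
      · exact_mod_cast hs
    rw [hmod, Int.toNat_natCast]
  · intro v hv
    simp only [mem_range] at hv
    have h0 := Int.emod_nonneg (u * v - w) hbne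
    have hcast : (((u * v - w) % (b:ℤ)).toNat : ℤ) = (u * v - w) % (b:ℤ) :=
      Int.toNat_of_nonneg h0
    have hmod : (a * (w + (((u * v - w) % (b:ℤ)).toNat : ℤ))) % (b:ℤ) = ((v:ℕ) : ℤ) := by
      apply key
      · refine ⟨t * v + a * ((u * v - w) / (b:ℤ)), ?_⟩
        rw [hcast, Int.emod_def]
        linear_combination (-(v:ℤ)) * hut
      · positivity
      · exact_mod_cast hv
    rw [hmod, Int.toNat_natCast]
  · intro s hs
    have h0 := Int.emod_nonneg (a * (w + s)) hbne
    rw [Int.toNat_of_nonneg h0]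

lemma count_lt_int (c v : ℕ) (hv : v ≤ c) :
    ∑ f ∈ range c, (if f < v then (1 : ℤ) else 0) = v := by
  induction c with
  | zero => interval_cases v; simp
  | succ c ih =>
      rcases Nat.lt_or_ge c v with hcv | hcv
      · have hv' : v = c + 1 := by omega
        subst hv'
        rw [sum_range_succ, if_pos (by omega)]
        rw [Finset.sum_congr rfl (fun f hf => if_pos (by simp only [mem_range] at hf; omega))]
        simp
      · rw [sum_range_succ, if_neg (by omega), ih hcv, add_zero]

/-- `∑_{v<b} [b - h ≤ v] = h` for `0 ≤ h ≤ b` (as integers). -/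
lemma count_top (b : ℕ) (h : ℤ) (h0 : 0 ≤ h) (hb : h ≤ b) :
    ∑ v ∈ range b, (if (b : ℤ) - h ≤ (v : ℤ) then (1 : ℤ) else 0) = h := by
  have hK : b - h.toNat ≤ b := by omega
  have h1 := count_lt_int b (b - h.toNat) hK
  have h2 : ∀ v ∈ range b, (if (b : ℤ) - h ≤ (v : ℤ) then (1 : ℤ) else 0)
      = 1 - (if v < b - h.toNat then (1 : ℤ) else 0) := by
    intro v hv
    simp only [mem_range] at hv
    split_ifs with c1 c2 c2 <;> [skip; ring; skip; skip] <;> omega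
  rw [Finset.sum_congr rfl h2, Finset.sum_sub_distrib, h1, Finset.sum_const, card_range,
    nsmul_eq_mul, mul_one]
  push_cast; omega

lemma gauss1 (n : ℕ) : 2 * ∑ k ∈ range n, (k : ℤ) = n * (n - 1) := by
  induction n with
  | zero => simp
  | succ n ih => rw [sum_range_succ, mul_add, ih]; push_cast; ring

lemma gauss2 (n : ℕ) : 6 * ∑ k ∈ range n, (k : ℤ) ^ 2 = n * (n - 1) * (2 * n - 1) := by
  induction n with
  | zero => simp
  | succ n ih => rw [sum_range_succ, mul_add, ih]; push_cast; ring

lemma sum_id_ind (q K : ℕ) (hK : K ≤ q) :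
    2 * ∑ j ∈ range q, (j : ℤ) * (if K ≤ j then (1 : ℤ) else 0)
      = q * (q - 1) - K * (K - 1) := by
  have hsplit : range q = range (K + (q - K)) := by rw [Nat.add_sub_cancel' hK]
  rw [hsplit, sum_range_add]
  have hz : ∑ j ∈ range K, (j : ℤ) * (if K ≤ j then (1 : ℤ) else 0) = 0 :=
    Finset.sum_eq_zero fun j hj => by
      simp only [mem_range] at hj; rw [if_neg (by omega), mul_zero]
  have ho : ∀ i ∈ range (q - K), ((K + i : ℕ) : ℤ) * (if K ≤ K + i then (1 : ℤ) else 0)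
      = (K : ℤ) + i := by
    intro i hi; rw [if_pos (by omega)]; push_cast; ring
  rw [hz, Finset.sum_congr rfl ho, zero_add, Finset.sum_add_distrib, Finset.sum_const,
    card_range, nsmul_eq_mul]
  have g := gauss1 (q - K)
  have hc : ((q - K : ℕ) : ℤ) = (q : ℤ) - K := by
    rw [Nat.cast_sub hK]
  rw [hc] at g ⊢
  linear_combination g

/- ## Real-to-integer reduction -/

lemma saw_intCast (z : ℤ) : saw (z : ℝ) = 0 := by
  unfold saw; rw [if_pos ⟨z, rfl⟩]

lemma saw_frac (x : ℤ) (n : ℕ) (hn : 0 < n) (hnd : ¬ (n : ℤ) ∣ x) :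
    saw ((x : ℝ) / n) = ((x % (n : ℤ) : ℤ) : ℝ) / n - 1 / 2 := by
  have hnR : (0:ℝ) < n := by exact_mod_cast hn
  have hne : (n:ℝ) ≠ 0 := ne_of_gt hnR
  have hni : ¬ ∃ z : ℤ, (x : ℝ) / n = (z : ℝ) := by
    rintro ⟨z, hz⟩
    apply hnd
    rw [div_eq_iff hne] at hz
    refine ⟨z, ?_⟩
    exact_mod_cast hz.trans (mul_comm _ _)
  have hfloor : ⌊(x : ℝ) / (n : ℝ)⌋ = x / (n : ℤ) := by
    rw [show (x:ℝ)/(n:ℝ) = (((x:ℚ)/(n:ℚ) : ℚ) : ℝ) by push_cast; ring, Rat.floor_cast,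
      Rat.floor_intCast_div_natCast]
  unfold saw
  rw [if_neg hni, hfloor]
  have hdm := Int.mul_ediv_add_emod x (n : ℤ)
  have hc : ((x % (n:ℤ) : ℤ) : ℝ) = (x : ℝ) - (n : ℝ) * ((x / (n:ℤ) : ℤ) : ℝ) := by
    have : (x % (n:ℤ)) = x - (n:ℤ) * (x / (n:ℤ)) := by omega
    rw [this]; push_cast; ring
  rw [hc]
  field_simp

lemma norm_eq (x : ℤ) (n : ℕ) (hn : 0 < n) (hco : IsCoprime x (n : ℤ)) :
    (n : ℝ) ^ 2 * normDedekindSum x n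
      = 12 * (Tsum x n : ℝ) - 3 * (n : ℝ) ^ 2 * ((n : ℝ) - 1) := by
  have hnR : (0:ℝ) < n := by exact_mod_cast hn
  have hne : (n:ℝ) ≠ 0 := ne_of_gt hnR
  have hnz : (n:ℤ) ≠ 0 := by exact_mod_cast hne
  -- Step 1: restrict the sum to `Ico 1 n`
  have e1 : dedekindSum x n = ∑ k ∈ Ico 1 n, saw ((k : ℝ) / n) * saw ((x : ℝ) * k / n) := by
    unfold dedekindSum
    rw [← Finset.Ico_add_one_right_eq_Icc, Finset.sum_Ico_succ_top (by omega : 1 ≤ n)]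
    rw [show ((n:ℕ):ℝ)/((n:ℕ):ℝ) = ((1:ℤ):ℝ) by rw [div_self hne]; norm_num, saw_intCast,
      zero_mul, add_zero]
  -- Step 2: pointwise evaluation
  have e2 : ∀ k ∈ Ico 1 n, (4 : ℝ) * (n:ℝ)^2 * (saw ((k : ℝ) / n) * saw ((x : ℝ) * k / n))
      = ((2*(k:ℤ) - n) * (2*((x * k) % (n:ℤ)) - n) : ℤ) := by
    intro k hk
    simp only [mem_Ico] at hk
    have hd1 : ¬ (n : ℤ) ∣ ((k:ℕ) : ℤ) := by
      rw [Int.natCast_dvd_natCast]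
      intro hd
      exact absurd (Nat.le_of_dvd (by omega) hd) (by omega)
    have hd2 : ¬ (n : ℤ) ∣ x * ((k:ℕ) : ℤ) := by
      intro hd
      exact hd1 (hco.symm.dvd_of_dvd_mul_left hd)
    have hs1 : saw ((k : ℝ) / n) = (((k:ℕ) : ℤ) : ℝ) / n - 1/2 := by
      have := saw_frac ((k:ℕ) : ℤ) n hn hd1
      rw [Int.emod_eq_of_lt (by positivity) (by exact_mod_cast hk.2)] at this
      push_cast at this ⊢
      exact this
    have hs2 : saw ((x : ℝ) * k / n) = (((x * k) % (n:ℤ) : ℤ) : ℝ) / n - 1/2 := by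
      have := saw_frac (x * (k:ℕ)) n hn hd2
      rw [show (x:ℝ) * ((k:ℕ):ℝ) = ((x * ((k:ℕ):ℤ) : ℤ) : ℝ) by push_cast; ring]
      convert this using 3
    rw [hs1, hs2]
    push_cast
    field_simp
    ring
  -- Step 3: the integer sum identity
  have hperm : ∑ s ∈ range n, ((x * s) % (n:ℤ)) = ∑ v ∈ range n, (v : ℤ) := by
    have := emod_perm x n hn hco 0 id
    simpa using this
  have hz : ∑ k ∈ Ico 1 n, (2*(k:ℤ) - n) * (2*((x * k) % (n:ℤ)) - n)
      = 4 * Tsum x n - (n:ℤ)^2 * ((n:ℤ) - 1) := by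
    have hsplit : ∑ k ∈ range n, (2*(k:ℤ) - n) * (2*((x * k) % (n:ℤ)) - n)
        = (2*((0:ℕ):ℤ) - n) * (2*((x * (0:ℕ)) % (n:ℤ)) - n)
          + ∑ k ∈ Ico 1 n, (2*(k:ℤ) - n) * (2*((x * k) % (n:ℤ)) - n) := by
      rw [range_eq_Ico]
      exact Finset.sum_eq_sum_Ico_succ_bot hn _
    have hexp : ∑ k ∈ range n, (2*(k:ℤ) - n) * (2*((x * k) % (n:ℤ)) - n)
        = 4 * Tsum x n - 2*(n:ℤ) * (∑ k ∈ range n, (k:ℤ))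
          - 2*(n:ℤ) * (∑ k ∈ range n, ((x * k) % (n:ℤ))) + n * ((n:ℤ) * n) := by
      unfold Tsum
      rw [Finset.mul_sum, Finset.mul_sum, Finset.mul_sum]
      rw [← Finset.sum_sub_distrib, ← Finset.sum_sub_distrib,
        show (n : ℤ) * ((n:ℤ) * n) = ∑ _k ∈ range n, ((n:ℤ) * n) by
          rw [Finset.sum_const, card_range, nsmul_eq_mul],
        ← Finset.sum_add_distrib]
      exact Finset.sum_congr rfl fun k _ => by ring
    have hg := gauss1 n
    have h0 : (2*((0:ℕ):ℤ) - n) * (2*((x * (0:ℕ)) % (n:ℤ)) - n) = (n:ℤ) * n := by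
      norm_num
    rw [hexp, hperm] at hsplit
    rw [h0] at hsplit
    linear_combination -hsplit - 2 * (n:ℤ) * hg
  -- Step 4: assemble over ℝ
  unfold normDedekindSum
  rw [e1, Finset.mul_sum, Finset.mul_sum]
  have e3 : ∀ k ∈ Ico 1 n,
      (n:ℝ)^2 * (12 * (saw ((k : ℝ) / n) * saw ((x : ℝ) * k / n)))
      = 3 * (((2*(k:ℤ) - n) * (2*((x * k) % (n:ℤ)) - n) : ℤ) : ℝ) := by
    intro k hk
    have := e2 k hk
    linarith [this]
  rw [Finset.sum_congr rfl e3, ← Finset.mul_sum, ← Int.cast_sum, hz]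
  push_cast
  ring


/- ## Nat helpers for the floor computations -/

lemma cast_div (x y : ℕ) : ((x / y : ℕ) : ℤ) = (x:ℤ) / (y:ℤ) := Int.natCast_div x y

lemma cast_mod (x y : ℕ) : ((x % y : ℕ) : ℤ) = (x:ℤ) % (y:ℤ) := Int.natCast_mod x y

/-- block counting: over an interval of length `b*mm`, an affine map mod `b` takes each
residue exactly `mm` times. -/
lemma emod_count_blocks (a : ℤ) (b : ℕ) (hb : 0 < b) (hco : IsCoprime a (b : ℤ))
    (w t : ℤ) (mm : ℕ) :
    ∑ i ∈ range (b * mm), (if t ≤ (a * (w + i)) % (b:ℤ) then (1:ℤ) else 0)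
      = mm * ∑ v ∈ range b, (if t ≤ (v:ℤ) then (1:ℤ) else 0) := by
  rw [sum_range_mul]
  have hblock : ∀ s ∈ range mm,
      (∑ i ∈ range b, (if t ≤ (a * (w + ((b*s+i : ℕ) : ℤ))) % (b:ℤ) then (1:ℤ) else 0))
        = ∑ v ∈ range b, (if t ≤ (v:ℤ) then (1:ℤ) else 0) := by
    intro s _
    have e : ∀ i ∈ range b, (if t ≤ (a * (w + ((b*s+i : ℕ) : ℤ))) % (b:ℤ) then (1:ℤ) else 0)
        = (if t ≤ (a * ((w + (b:ℤ)*s) + (i:ℤ))) % (b:ℤ) then (1:ℤ) else 0) := by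
      intro i _
      have : w + ((b*s+i : ℕ) : ℤ) = (w + (b:ℤ)*s) + (i:ℤ) := by push_cast; ring
      rw [this]
    rw [Finset.sum_congr rfl e,
      emod_perm a b hb hco (w + (b:ℤ)*s) (fun x => if t ≤ x then (1:ℤ) else 0)]
  rw [Finset.sum_congr rfl hblock, Finset.sum_const, card_range, nsmul_eq_mul]

/-- the key cancellation: `h_j + b⌊mj/q⌋ = ⌊cj/q⌋`. -/
lemma h_plus (b m c q j : ℕ) (hq0 : 0 < q) (hc : c = b * m) :
    (b * ((m*j) % q)) / q + b * ((m*j) / q) = (c*j) / q := by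
  have key1 : b * ((m*j) % q) + q * (b * ((m*j) / q)) = c * j := by
    have h := Nat.mod_add_div (m*j) q
    calc b * ((m*j) % q) + q * (b * ((m*j) / q))
        = b * ((m*j) % q + q * ((m*j)/q)) := by ring
      _ = b * (m*j) := by rw [h]
      _ = c * j := by rw [hc]; ring
  have key2 : (b * ((m*j) % q)) % q = (c*j) % q := by
    conv_rhs => rw [← key1]
    rw [Nat.add_mul_mod_self_left]
  have d1 := Nat.mod_add_div (b * ((m*j) % q)) q
  have d2 := Nat.mod_add_div (c*j) q
  apply Nat.eq_of_mul_eq_mul_left hq0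
  apply Nat.add_left_cancel (n := (b * ((m*j) % q)) % q)
  calc (b * ((m*j) % q)) % q + q * ((b * ((m*j) % q)) / q + b * ((m*j) / q))
      = ((b * ((m*j) % q)) % q + q * ((b * ((m*j) % q)) / q)) + q * (b * ((m*j) / q)) := by ring
    _ = b * ((m*j) % q) + q * (b * ((m*j) / q)) := by rw [d1]
    _ = c * j := key1
    _ = (c*j) % q + q * ((c*j)/q) := (d2).symm
    _ = (b * ((m*j) % q)) % q + q * ((c*j)/q) := by rw [key2]

/-- on the stratum `fc+1 ≤ j ≤ fc+c` (with `1 ≤ f < c`) we have `⌊cj/q⌋ = f`. -/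
lemma cdiv_eval (b m c q f j : ℕ) (hc : c = b * m) (hq : q = c * c + 1)
    (hf1 : 1 ≤ f) (hfc : f < c) (hj1 : f*c + 1 ≤ j) (hj2 : j ≤ f*c + c) :
    (c*j) / q = f := by
  apply Nat.div_eq_of_lt_le
  · calc f * q = f*(c*c) + f := by rw [hq]; ring
      _ ≤ f*(c*c) + c := by omega
      _ = c*(f*c + 1) := by ring
      _ ≤ c*j := Nat.mul_le_mul_left c hj1
  · calc c*j ≤ c*(f*c+c) := Nat.mul_le_mul_left c hj2
      _ = f*(c*c) + c*c := by ring
      _ < (f+1)*(c*c+1) := by nlinarith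
      _ = (f+1)*q := by rw [hq]

lemma h_eval (b m c q f j : ℕ) (hb : 0 < b) (hc : c = b * m) (hq : q = c * c + 1)
    (hf1 : 1 ≤ f) (hfc : f < c) (hj1 : f*c + 1 ≤ j) (hj2 : j ≤ f*c + c) :
    (b * ((m*j) % q)) / q = f % b := by
  have hq0 : 0 < q := by omega
  have hdiv : (c*j) / q = f := cdiv_eval b m c q f j hc hq hf1 hfc hj1 hj2
  have he : (m*j) / q = f / b := by
    have h2 : b * (m*j) = c*j := by rw [hc]; ring
    calc (m*j) / q = (b * (m*j)) / (b * q) := (Nat.mul_div_mul_left _ _ hb).symm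
      _ = (c*j) / (b*q) := by rw [h2]
      _ = (c*j) / (q*b) := by rw [Nat.mul_comm b q]
      _ = ((c*j) / q) / b := (Nat.div_div_eq_div_mul _ _ _).symm
      _ = f / b := by rw [hdiv]
  have hp := h_plus b m c q j hq0 hc
  rw [he, hdiv] at hp
  have hm := Nat.mod_add_div f b
  omega

lemma h_zero (b m c q j : ℕ) (hb : 0 < b) (hc : c = b * m) (hq : q = c * c + 1)
    (hj : j ≤ c) :
    (b * ((m*j) % q)) / q = 0 := by
  have hmj : m * j < q := by
    have h1 : m * j ≤ m * c := Nat.mul_le_mul_left m hj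
    have h2 : b * (m * c) = c * c := by rw [hc]; ring
    nlinarith
  rw [Nat.mod_eq_of_lt hmj]
  apply Nat.div_eq_of_lt
  have h1 : b * (m * j) ≤ b * (m * c) := Nat.mul_le_mul_left b (Nat.mul_le_mul_left m hj)
  have h2 : b * (m * c) = c * c := by rw [hc]; ring
  omega

lemma div_iff_strat (c q f j : ℕ) (hq : q = c * c + 1) (hfc : f < c) (hj : j < q) :
    (f+1) * q ≤ c * j ↔ (f+1)*c + 1 ≤ j := by
  constructor
  · intro h
    have h1 : c * ((f+1)*c) < c * j := by
      calc c * ((f+1)*c) = (f+1)*(c*c) := by ring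
        _ < (f+1)*(c*c) + (f+1) := by omega
        _ = (f+1)*q := by rw [hq]; ring
        _ ≤ c * j := h
    have := Nat.lt_of_mul_lt_mul_left h1
    omega
  · intro h
    calc (f+1) * q = (f+1)*(c*c) + (f+1) := by rw [hq]; ring
      _ ≤ (f+1)*(c*c) + c := by omega
      _ = c * ((f+1)*c + 1) := by ring
      _ ≤ c * j := Nat.mul_le_mul_left c h


lemma count_eval (a : ℤ) (b : ℕ) (hb : 0 < b) (hco : IsCoprime a (b : ℤ))
    (w H : ℤ) (h0 : 0 ≤ H) (h1 : H ≤ b) :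
    ∑ s ∈ range b, (if (b:ℤ) - ((a*(w+(s:ℤ))) % (b:ℤ)) ≤ H then (1:ℤ) else 0) = H := by
  have e : ∀ s ∈ range b, (if (b:ℤ) - ((a*(w+(s:ℤ))) % (b:ℤ)) ≤ H then (1:ℤ) else 0)
      = (fun x => if (b:ℤ) - H ≤ x then (1:ℤ) else 0) ((a*(w+(s:ℤ))) % (b:ℤ)) := by
    intro s _
    exact if_congr (by constructor <;> intro <;> linarith) rfl rfl
  rw [Finset.sum_congr rfl e]
  exact (emod_perm a b hb hco w (fun x => if (b:ℤ) - H ≤ x then (1:ℤ) else 0)).trans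
    (count_top b H h0 h1)

lemma count_blocks_eval (a : ℤ) (b : ℕ) (hb : 0 < b) (hco : IsCoprime a (b : ℤ))
    (w H : ℤ) (h0 : 0 ≤ H) (h1 : H ≤ b) (mm : ℕ) :
    ∑ i ∈ range (b*mm), (if (b:ℤ) - ((a*(w+(i:ℤ))) % (b:ℤ)) ≤ H then (1:ℤ) else 0)
      = mm * H := by
  have e : ∀ i ∈ range (b*mm), (if (b:ℤ) - ((a*(w+(i:ℤ))) % (b:ℤ)) ≤ H then (1:ℤ) else 0)
      = (if (b:ℤ) - H ≤ (a*(w+(i:ℤ))) % (b:ℤ) then (1:ℤ) else 0) := by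
    intro i _
    exact if_congr (by constructor <;> intro <;> linarith) rfl rfl
  rw [Finset.sum_congr rfl e, emod_count_blocks a b hb hco w ((b:ℤ) - H) mm,
    count_top b H h0 h1]

lemma strata_eval (a : ℤ) (b m c q : ℕ) (hb : 0 < b) (hc1 : 0 < c)
    (hco : IsCoprime a (b : ℤ)) (hc : c = b * m) (hq : q = c * c + 1) :
    ∑ j ∈ range q, (∑ s ∈ range b, (s:ℤ) *
        (if (b:ℤ) - ((a*((j:ℤ)+(s:ℤ))) % (b:ℤ)) ≤ (((b * ((m*j) % q)) / q : ℕ) : ℤ)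
          then (1:ℤ) else 0))
      = ((m:ℤ) * (∑ v ∈ range b, (v:ℤ)))^2 := by
  have hbz : (0:ℤ) < (b:ℤ) := by exact_mod_cast hb
  have hsplitq : q = (c+1) + c*(c-1) := by
    rcases c with _ | c'
    · omega
    · have h2 : (c'+1)*(c'+1) = (c'+1)*c' + (c'+1) := by ring
      simp only [Nat.add_sub_cancel]
      omega
  rw [show range q = range ((c+1) + c*(c-1)) from by rw [← hsplitq],
    sum_range_add, sum_range_mul]
  have part0 : ∑ j ∈ range (c+1), (∑ s ∈ range b, (s:ℤ) *
      (if (b:ℤ) - ((a*((j:ℤ)+(s:ℤ))) % (b:ℤ)) ≤ (((b * ((m*j) % q)) / q : ℕ) : ℤ)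
        then (1:ℤ) else 0)) = 0 := by
    apply Finset.sum_eq_zero
    intro j hj
    simp only [mem_range] at hj
    have h0 : (b * ((m*j) % q)) / q = 0 := h_zero b m c q j hb hc hq (by omega)
    apply Finset.sum_eq_zero
    intro s _
    have hρb : (a*((j:ℤ)+(s:ℤ))) % (b:ℤ) < b := Int.emod_lt_of_pos _ hbz
    rw [h0, if_neg (by simp only [Nat.cast_zero]; omega), mul_zero]
  rw [part0, zero_add]
  have hmodb : ∀ t : ℕ, (t+1) % b < b := fun t => Nat.mod_lt _ hb
  have part1 : ∀ t ∈ range (c-1),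
      (∑ i ∈ range c, ∑ s ∈ range b, (s:ℤ) *
        (if (b:ℤ) - ((a*((((c+1) + (c*t+i) : ℕ):ℤ)+(s:ℤ))) % (b:ℤ))
            ≤ (((b * ((m*((c+1) + (c*t+i))) % q)) / q : ℕ) : ℤ) then (1:ℤ) else 0))
        = ((m:ℤ) * (∑ v ∈ range b, (v:ℤ))) * ((((t+1) % b : ℕ) : ℤ)) := by
    intro t ht
    simp only [mem_range] at ht
    have e : ∀ i ∈ range c, ∀ s ∈ range b,
        ((s:ℤ) * (if (b:ℤ) - ((a*((((c+1) + (c*t+i) : ℕ):ℤ)+(s:ℤ))) % (b:ℤ))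
            ≤ (((b * ((m*((c+1) + (c*t+i))) % q)) / q : ℕ) : ℤ) then (1:ℤ) else 0))
        = (s:ℤ) * (if (b:ℤ) - ((a*(((((t+1)*c+1 : ℕ):ℤ) + (s:ℤ)) + (i:ℤ))) % (b:ℤ))
            ≤ ((((t+1) % b : ℕ)):ℤ) then (1:ℤ) else 0) := by
      intro i hi s _
      simp only [mem_range] at hi
      have harg : ((((c+1) + (c*t+i) : ℕ):ℤ)) + (s:ℤ)
          = ((((t+1)*c+1 : ℕ):ℤ) + (s:ℤ)) + (i:ℤ) := by push_cast; ring
      have hHj : (b * ((m*((c+1) + (c*t+i))) % q)) / q = (t+1) % b := by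
        rw [show (c+1) + (c*t+i) = (t+1)*c+1+i from by ring]
        exact h_eval b m c q (t+1) ((t+1)*c+1+i) hb hc hq (by omega) (by omega) (by omega)
          (by omega)
      rw [harg, hHj]
    rw [Finset.sum_congr rfl (fun i hi => Finset.sum_congr rfl (fun s hs => e i hi s hs)),
      Finset.sum_comm]
    have inner : ∀ s ∈ range b,
        (∑ i ∈ range c, (s:ℤ) *
          (if (b:ℤ) - ((a*(((((t+1)*c+1 : ℕ):ℤ) + (s:ℤ)) + (i:ℤ))) % (b:ℤ))
            ≤ ((((t+1) % b : ℕ)):ℤ) then (1:ℤ) else 0))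
        = (s:ℤ) * ((m:ℤ) * ((((t+1) % b : ℕ)):ℤ)) := by
      intro s _
      rw [← Finset.mul_sum]
      congr 1
      rw [show range c = range (b*m) from by rw [hc]]
      exact count_blocks_eval a b hb hco ((((t+1)*c+1 : ℕ):ℤ) + (s:ℤ)) ((((t+1) % b : ℕ)):ℤ)
        (by positivity) (by exact_mod_cast (hmodb t).le) m
    rw [Finset.sum_congr rfl inner]
    rw [show ∀ X Y : ℤ, ∑ s ∈ range b, (s:ℤ) * (X * Y) = ((X * (∑ v ∈ range b, (v:ℤ))) * Y)
      from fun X Y => by rw [← Finset.sum_mul]; ring]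
  rw [Finset.sum_congr rfl part1]
  have hSMOD : (∑ x ∈ range (c-1), (((x+1) % b : ℕ):ℤ)) = (m:ℤ) * (∑ v ∈ range b, (v:ℤ)) := by
    have h1 : (∑ f ∈ range c, ((f % b : ℕ):ℤ)) = (m:ℤ) * (∑ v ∈ range b, (v:ℤ)) := by
      rw [show range c = range (b*m) from by rw [hc], sum_range_mul]
      have e : ∀ t ∈ range m, (∑ i ∈ range b, (((b*t+i) % b : ℕ):ℤ)) = ∑ v ∈ range b, (v:ℤ) := by
        intro t _
        apply Finset.sum_congr rfl
        intro i hi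
        simp only [mem_range] at hi
        rw [Nat.mul_add_mod, Nat.mod_eq_of_lt hi]
      rw [Finset.sum_congr rfl e, Finset.sum_const, card_range, nsmul_eq_mul]
    have h2 := Finset.sum_range_succ' (fun f => ((f % b : ℕ):ℤ)) (c-1)
    rw [show c - 1 + 1 = c from by omega] at h2
    rw [h1] at h2
    simp only [Nat.zero_mod, Nat.cast_zero, add_zero] at h2
    exact h2.symm
  rw [← Finset.mul_sum, hSMOD]
  ring


lemma E2_eval (a : ℤ) (b m c q : ℕ) (hb : 0 < b) (hc1 : 0 < c) (hco : IsCoprime a (b : ℤ))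
    (hc : c = b * m) (hq : q = c * c + 1) :
    ∑ k ∈ range (b*q), (k:ℤ) *
        (if (b:ℤ)*q ≤ (q:ℤ)*((a*k) % (b:ℤ)) + (b:ℤ)*(((m:ℤ)*k) % (q:ℤ)) then (1:ℤ) else 0)
      = (∑ j ∈ range q, (j:ℤ) * (((b * ((m*j) % q)) / q : ℕ) : ℤ))
        + (q:ℤ) * ((m:ℤ) * (∑ v ∈ range b, (v:ℤ)))^2 := by
  have hq0 : 0 < q := by omega
  have hbz : (0:ℤ) < b := by exact_mod_cast hb
  have hqz : (0:ℤ) < q := by exact_mod_cast hq0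
  have hbne : (b:ℤ) ≠ 0 := ne_of_gt hbz
  have hqne : (q:ℤ) ≠ 0 := ne_of_gt hqz
  rw [show b*q = q*b from Nat.mul_comm b q,
    sum_range_mul (fun k => (k:ℤ) *
      (if (b:ℤ)*q ≤ (q:ℤ)*((a*k) % (b:ℤ)) + (b:ℤ)*(((m:ℤ)*k) % (q:ℤ)) then (1:ℤ) else 0)) q b,
    Finset.sum_comm]
  have e : ∀ j ∈ range q, ∀ s ∈ range b,
      (((q*s+j : ℕ)):ℤ) * (if (b:ℤ)*q ≤ (q:ℤ)*((a*((q*s+j : ℕ)) ) % (b:ℤ))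
          + (b:ℤ)*(((m:ℤ)*((q*s+j : ℕ))) % (q:ℤ)) then (1:ℤ) else 0)
        = (q:ℤ)*((s:ℤ) * (if (b:ℤ) - ((a*((j:ℤ)+(s:ℤ))) % (b:ℤ))
              ≤ (((b * ((m*j) % q)) / q : ℕ):ℤ) then (1:ℤ) else 0))
          + (j:ℤ) * (if (b:ℤ) - ((a*((j:ℤ)+(s:ℤ))) % (b:ℤ))
              ≤ (((b * ((m*j) % q)) / q : ℕ):ℤ) then (1:ℤ) else 0) := by
    intro j hj s hs
    have e1 : (a*(((q*s+j : ℕ)):ℤ)) % (b:ℤ) = (a*((j:ℤ)+(s:ℤ))) % (b:ℤ) := by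
      have harg : a*(((q*s+j : ℕ)):ℤ)
          = a*((j:ℤ)+(s:ℤ)) + (b:ℤ)*(a*(s:ℤ)*((b:ℤ)*(m:ℤ)*(m:ℤ))) := by
        push_cast [hq, hc]; ring
      rw [harg, Int.add_mul_emod_self_left]
    have e2 : ((m:ℤ)*(((q*s+j : ℕ)):ℤ)) % (q:ℤ) = ((m:ℤ)*(j:ℤ)) % (q:ℤ) := by
      have harg : (m:ℤ)*(((q*s+j : ℕ)):ℤ)
          = (m:ℤ)*(j:ℤ) + (q:ℤ)*((m:ℤ)*(s:ℤ)) := by push_cast; ring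
      rw [harg, Int.add_mul_emod_self_left]
    have e3 : (((b * ((m*j) % q)) / q : ℕ):ℤ) = ((b:ℤ)*(((m:ℤ)*(j:ℤ)) % (q:ℤ))) / (q:ℤ) := by
      rw [cast_div, Nat.cast_mul, cast_mod, Nat.cast_mul]
    have hρ0 : 0 ≤ (a*((j:ℤ)+(s:ℤ))) % (b:ℤ) := Int.emod_nonneg _ hbne
    have hρb : (a*((j:ℤ)+(s:ℤ))) % (b:ℤ) < b := Int.emod_lt_of_pos _ hbz
    have hu0 : 0 ≤ ((m:ℤ)*(j:ℤ)) % (q:ℤ) := Int.emod_nonneg _ hqne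
    have hiff : ((b:ℤ)*q ≤ (q:ℤ)*((a*((j:ℤ)+(s:ℤ))) % (b:ℤ)) + (b:ℤ)*(((m:ℤ)*(j:ℤ)) % (q:ℤ)))
        ↔ ((b:ℤ) - ((a*((j:ℤ)+(s:ℤ))) % (b:ℤ)) ≤ (((b * ((m*j) % q)) / q : ℕ):ℤ)) := by
      rw [e3, Int.le_ediv_iff_mul_le hqz]
      constructor <;> intro h <;> nlinarith
    rw [e1, e2, if_congr hiff rfl rfl]
    push_cast
    ring
  rw [Finset.sum_congr rfl (fun j hj => Finset.sum_congr rfl (fun s hs => e j hj s hs))]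
  have e4 : ∀ j ∈ range q,
      (∑ s ∈ range b, ((q:ℤ)*((s:ℤ) * (if (b:ℤ) - ((a*((j:ℤ)+(s:ℤ))) % (b:ℤ))
            ≤ (((b * ((m*j) % q)) / q : ℕ):ℤ) then (1:ℤ) else 0))
          + (j:ℤ) * (if (b:ℤ) - ((a*((j:ℤ)+(s:ℤ))) % (b:ℤ))
            ≤ (((b * ((m*j) % q)) / q : ℕ):ℤ) then (1:ℤ) else 0)))
      = (q:ℤ)*(∑ s ∈ range b, (s:ℤ) * (if (b:ℤ) - ((a*((j:ℤ)+(s:ℤ))) % (b:ℤ))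
            ≤ (((b * ((m*j) % q)) / q : ℕ):ℤ) then (1:ℤ) else 0))
        + (j:ℤ) * (∑ s ∈ range b, (if (b:ℤ) - ((a*((j:ℤ)+(s:ℤ))) % (b:ℤ))
            ≤ (((b * ((m*j) % q)) / q : ℕ):ℤ) then (1:ℤ) else 0)) := by
    intro j _
    rw [Finset.sum_add_distrib, ← Finset.mul_sum, ← Finset.mul_sum]
  rw [Finset.sum_congr rfl e4, Finset.sum_add_distrib, ← Finset.mul_sum]
  have e5 : ∀ j ∈ range q,
      (j:ℤ) * (∑ s ∈ range b, (if (b:ℤ) - ((a*((j:ℤ)+(s:ℤ))) % (b:ℤ))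
          ≤ (((b * ((m*j) % q)) / q : ℕ):ℤ) then (1:ℤ) else 0))
        = (j:ℤ) * (((b * ((m*j) % q)) / q : ℕ):ℤ) := by
    intro j _
    congr 1
    apply count_eval a b hb hco (j:ℤ)
    · positivity
    · have hmlt : (m*j) % q < q := Nat.mod_lt _ hq0
      have hlt : (b * ((m*j) % q)) / q < b := by
        rw [Nat.div_lt_iff_lt_mul hq0]
        calc b * ((m*j) % q) < b * q := by
              exact Nat.mul_lt_mul_of_le_of_lt (le_refl b) hmlt hb
          _ = b * q := rfl
      exact_mod_cast hlt.le
  rw [Finset.sum_congr rfl e5, strata_eval a b m c q hb hc1 hco hc hq]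
  ring

/- ## The main integer identity -/

theorem key_int (a : ℤ) (b m c q : ℕ) (hb : 0 < b) (hco : IsCoprime a (b : ℤ))
    (hc : c = b * m) (hq : q = c * c + 1) :
    12 * Tsum (a * q + c) (b * q)
      = (q : ℤ) ^ 2 * (12 * Tsum a b) + 3 * (b : ℤ) ^ 3 * (q : ℤ) ^ 2 * ((q : ℤ) - 1) := by
  -- degenerate case m = 0
  rcases Nat.eq_zero_or_pos m with hm0 | hm
  · subst hm0
    have hc0 : c = 0 := by omega
    subst hc0
    have hq1 : q = 1 := by omega
    subst hq1
    simp only [Nat.cast_one, Nat.cast_zero, mul_one, add_zero, Nat.mul_one]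
    ring
  -- main case
  have hc1 : 0 < c := by rw [hc]; positivity
  have hq0 : 0 < q := by omega
  have hbz : (0:ℤ) < b := by exact_mod_cast hb
  have hqz : (0:ℤ) < q := by exact_mod_cast hq0
  have hbne : (b:ℤ) ≠ 0 := ne_of_gt hbz
  have hqne : (q:ℤ) ≠ 0 := ne_of_gt hqz
  have hcz : (c:ℤ) = (b:ℤ) * m := by exact_mod_cast hc
  have hqc : (q:ℤ) = (c:ℤ) * c + 1 := by exact_mod_cast hq
  have hcoM : IsCoprime (m:ℤ) (q:ℤ) := ⟨-((b:ℤ)^2 * m), 1, by rw [hqc, hcz]; ring⟩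
  -- Step I : pointwise decomposition of the remainder
  have step1 : ∀ k : ℕ, ((a * q + c) * k) % ((b*q : ℕ) : ℤ)
      = (q:ℤ) * ((a * k) % (b:ℤ)) + (b:ℤ) * (((m:ℤ) * k) % (q:ℤ))
        - ((b:ℤ)*q) * (if (b:ℤ)*q ≤ (q:ℤ) * ((a * k) % (b:ℤ)) + (b:ℤ) * (((m:ℤ) * k) % (q:ℤ))
            then (1:ℤ) else 0) := by
    intro k
    have hBcast : ((b*q : ℕ) : ℤ) = (b:ℤ)*q := by push_cast; ring
    rw [hBcast]
    have hr0 : 0 ≤ (a * k) % (b:ℤ) := Int.emod_nonneg _ hbne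
    have hrb : (a * k) % (b:ℤ) < b := Int.emod_lt_of_pos _ hbz
    have hu0 : 0 ≤ ((m:ℤ) * k) % (q:ℤ) := Int.emod_nonneg _ hqne
    have huq : ((m:ℤ) * k) % (q:ℤ) < q := Int.emod_lt_of_pos _ hqz
    have hv0 : 0 ≤ (q:ℤ) * ((a * k) % (b:ℤ)) + (b:ℤ) * (((m:ℤ) * k) % (q:ℤ)) :=
      add_nonneg (mul_nonneg hqz.le hr0) (mul_nonneg hbz.le hu0)
    have hv2 : (q:ℤ) * ((a * k) % (b:ℤ)) + (b:ℤ) * (((m:ℤ) * k) % (q:ℤ)) < 2*((b:ℤ)*q) := by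
      have t1 : (q:ℤ) * ((a * k) % (b:ℤ)) < (q:ℤ)*b := mul_lt_mul_of_pos_left hrb hqz
      have t2 : (b:ℤ) * (((m:ℤ) * k) % (q:ℤ)) < (b:ℤ)*q := mul_lt_mul_of_pos_left huq hbz
      linarith
    have hAk : (a * q + c) * (k:ℤ)
        = ((q:ℤ) * ((a*k) % (b:ℤ)) + (b:ℤ) * (((m:ℤ)*k) % (q:ℤ)))
          + ((b:ℤ)*q) * ((a*k) / (b:ℤ) + ((m:ℤ)*k) / (q:ℤ)) := by
      have hd1 : (a*k) % (b:ℤ) = a*k - (b:ℤ) * ((a*k)/(b:ℤ)) := by rw [Int.emod_def]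
      have hd2 : ((m:ℤ)*k) % (q:ℤ) = (m:ℤ)*k - (q:ℤ) * (((m:ℤ)*k)/(q:ℤ)) := by
        rw [Int.emod_def]
      rw [hd1, hd2, hcz]; ring
    rw [hAk, Int.add_mul_emod_self_left]
    by_cases hcase : (b:ℤ)*q ≤ (q:ℤ) * ((a * k) % (b:ℤ)) + (b:ℤ) * (((m:ℤ) * k) % (q:ℤ))
    · rw [if_pos hcase]
      have e : (q:ℤ) * ((a * k) % (b:ℤ)) + (b:ℤ) * (((m:ℤ) * k) % (q:ℤ))
          = ((q:ℤ) * ((a * k) % (b:ℤ)) + (b:ℤ) * (((m:ℤ) * k) % (q:ℤ)) - (b:ℤ)*q)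
            + ((b:ℤ)*q) * 1 := by ring
      rw [e, Int.add_mul_emod_self_left, Int.emod_eq_of_lt (by linarith) (by linarith)]
      ring
    · rw [if_neg hcase]
      push_neg at hcase
      rw [Int.emod_eq_of_lt hv0 hcase]
      ring
  -- Step II : split `Tsum`
  have hTsplit : Tsum (a * q + c) (b*q)
      = (q:ℤ) * (∑ k ∈ range (b*q), (k:ℤ) * ((a*k) % (b:ℤ)))
        + (b:ℤ) * (∑ k ∈ range (b*q), (k:ℤ) * (((m:ℤ)*k) % (q:ℤ)))
        - ((b:ℤ)*q) * (∑ k ∈ range (b*q), (k:ℤ) *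
            (if (b:ℤ)*q ≤ (q:ℤ)*((a*k) % (b:ℤ)) + (b:ℤ)*(((m:ℤ)*k) % (q:ℤ))
              then (1:ℤ) else 0)) := by
    unfold Tsum
    rw [Finset.mul_sum, Finset.mul_sum, Finset.mul_sum, ← Finset.sum_add_distrib,
      ← Finset.sum_sub_distrib]
    refine Finset.sum_congr rfl fun k _ => ?_
    rw [step1 k]; ring
  -- Step III : evaluate the `r` part
  have hSkr : (∑ k ∈ range (b*q), (k:ℤ) * ((a*k) % (b:ℤ)))
      = (b:ℤ) * (∑ t ∈ range q, (t:ℤ)) * (∑ v ∈ range b, (v:ℤ)) + (q:ℤ) * Tsum a b := by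
    rw [sum_range_mul (fun k => (k:ℤ) * ((a*k) % (b:ℤ))) b q, Finset.sum_comm]
    have inner : ∀ i ∈ range b,
        (∑ t ∈ range q, (((b*t+i : ℕ)):ℤ) * ((a*((b*t+i : ℕ))) % (b:ℤ)))
          = ((b:ℤ) * (∑ t ∈ range q, (t:ℤ))) * ((a*i) % (b:ℤ))
            + (q:ℤ) * ((i:ℤ) * ((a*i) % (b:ℤ))) := by
      intro i _
      have e : ∀ t ∈ range q, (((b*t+i : ℕ)):ℤ) * ((a*((b*t+i : ℕ))) % (b:ℤ))
          = ((a*(i:ℤ)) % (b:ℤ)) * ((b:ℤ)*(t:ℤ)) + ((a*(i:ℤ)) % (b:ℤ)) * (i:ℤ) := by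
        intro t _
        have hm1 : a*(((b*t+i : ℕ)):ℤ) = a*(i:ℤ) + (b:ℤ)*(a*t) := by push_cast; ring
        rw [hm1, Int.add_mul_emod_self_left]
        push_cast; ring
      rw [Finset.sum_congr rfl e, Finset.sum_add_distrib, ← Finset.mul_sum,
        Finset.sum_const, card_range, nsmul_eq_mul, ← Finset.mul_sum]
      ring
    rw [Finset.sum_congr rfl inner, Finset.sum_add_distrib, ← Finset.mul_sum, ← Finset.mul_sum]
    have hperm : (∑ i ∈ range b, ((a*i) % (b:ℤ))) = ∑ v ∈ range b, (v:ℤ) := by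
      have h := emod_perm a b hb hco 0 id
      simpa using h
    rw [hperm]
    unfold Tsum
    ring
  -- Step IV : evaluate the `u` part
  have hSku : (∑ k ∈ range (b*q), (k:ℤ) * (((m:ℤ)*k) % (q:ℤ)))
      = (q:ℤ) * (∑ v ∈ range b, (v:ℤ)) * (∑ t ∈ range q, (t:ℤ))
        + (b:ℤ) * (∑ j ∈ range q, (j:ℤ) * (((m:ℤ)*j) % (q:ℤ))) := by
    rw [show b*q = q*b from Nat.mul_comm b q,
      sum_range_mul (fun k => (k:ℤ) * (((m:ℤ)*k) % (q:ℤ))) q b, Finset.sum_comm]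
    have inner : ∀ j ∈ range q,
        (∑ s ∈ range b, (((q*s+j : ℕ)):ℤ) * (((m:ℤ)*((q*s+j : ℕ))) % (q:ℤ)))
          = ((q:ℤ) * (∑ v ∈ range b, (v:ℤ))) * (((m:ℤ)*(j:ℤ)) % (q:ℤ))
            + (b:ℤ) * ((j:ℤ) * (((m:ℤ)*(j:ℤ)) % (q:ℤ))) := by
      intro j _
      have e : ∀ s ∈ range b, (((q*s+j : ℕ)):ℤ) * (((m:ℤ)*((q*s+j : ℕ))) % (q:ℤ))
          = (((m:ℤ)*(j:ℤ)) % (q:ℤ)) * ((q:ℤ)*(s:ℤ)) + (((m:ℤ)*(j:ℤ)) % (q:ℤ)) * (j:ℤ) := by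
        intro s _
        have hm1 : (m:ℤ)*(((q*s+j : ℕ)):ℤ) = (m:ℤ)*(j:ℤ) + (q:ℤ)*((m:ℤ)*s) := by
          push_cast; ring
        rw [hm1, Int.add_mul_emod_self_left]
        push_cast; ring
      rw [Finset.sum_congr rfl e, Finset.sum_add_distrib, ← Finset.mul_sum,
        Finset.sum_const, card_range, nsmul_eq_mul, ← Finset.mul_sum]
      ring
    rw [Finset.sum_congr rfl inner, Finset.sum_add_distrib, ← Finset.mul_sum, ← Finset.mul_sum]
    have hperm2 : (∑ x ∈ range q, (((m:ℤ)*x) % (q:ℤ))) = ∑ v ∈ range q, (v:ℤ) := by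
      have h := emod_perm (m:ℤ) q hq0 hcoM 0 id
      simpa using h
    rw [hperm2]
  -- Step V : the inner Dedekind-type sum mod q
  have hT2 : (∑ j ∈ range q, (j:ℤ) * (((m:ℤ)*j) % (q:ℤ)))
      = (m:ℤ) * (∑ j ∈ range q, (j:ℤ)^2)
        - (q:ℤ) * (∑ j ∈ range q, (j:ℤ) * (((m*j/q : ℕ)):ℤ)) := by
    rw [Finset.mul_sum, Finset.mul_sum, ← Finset.sum_sub_distrib]
    refine Finset.sum_congr rfl fun j _ => ?_
    have hmd : ((m:ℤ)*(j:ℤ)) % (q:ℤ) = (m:ℤ)*(j:ℤ) - (q:ℤ)*(((m*j/q : ℕ)):ℤ) := by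
      rw [cast_div, Nat.cast_mul, Int.emod_def]
    rw [hmd]; ring
  -- Step VI : the epsilon sum
  have hE2 := E2_eval a b m c q hb hc1 hco hc hq
  -- Step VII : SJH in terms of W' and W
  have hSJH : (∑ j ∈ range q, (j:ℤ) * (((b * ((m*j) % q)) / q : ℕ) : ℤ))
      = (∑ j ∈ range q, (j:ℤ) * (((c*j/q : ℕ)):ℤ))
        - (b:ℤ) * (∑ j ∈ range q, (j:ℤ) * (((m*j/q : ℕ)):ℤ)) := by
    rw [Finset.mul_sum, ← Finset.sum_sub_distrib]
    refine Finset.sum_congr rfl fun j _ => ?_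
    have hp := h_plus b m c q j hq0 hc
    have hcast := congrArg (fun z : ℕ => (z : ℤ)) hp
    push_cast at hcast ⊢
    linear_combination (j:ℤ) * hcast
  -- Step VIII : closed form for W'
  have hW' : 12 * (∑ j ∈ range q, (j:ℤ) * (((c*j/q : ℕ)):ℤ))
      = 6*(c:ℤ)*q*((q:ℤ)-1) - (c:ℤ)^2*(((c:ℤ)+1)*c*(2*c+1)) - 3*(c:ℤ)*(((c:ℤ)+1)*c) := by
    have hpt : ∀ j ∈ range q, ((j:ℤ) * (((c*j/q : ℕ)):ℤ))
        = ∑ f ∈ range c, (j:ℤ) * (if (f+1)*c+1 ≤ j then (1:ℤ) else 0) := by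
      intro j hj
      simp only [mem_range] at hj
      have hvc : (c*j)/q < c := by
        rw [Nat.div_lt_iff_lt_mul hq0]
        exact Nat.mul_lt_mul_of_le_of_lt (le_refl c) hj hc1
      have hcl := count_lt_int c ((c*j)/q) hvc.le
      rw [← hcl, Finset.mul_sum]
      refine Finset.sum_congr rfl fun f hf => ?_
      simp only [mem_range] at hf
      have hif : (f < (c*j)/q) ↔ ((f+1)*c+1 ≤ j) := by
        rw [show (f < (c*j)/q) ↔ (f+1 ≤ (c*j)/q) from by omega,
          Nat.le_div_iff_mul_le hq0, div_iff_strat c q f j hq hf hj]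
      rw [if_congr hif rfl rfl]
    rw [Finset.sum_congr rfl hpt, Finset.sum_comm]
    have hinner : ∀ f ∈ range c,
        (∑ j ∈ range q, (j:ℤ) * (if (f+1)*c+1 ≤ j then (1:ℤ) else 0))
          = (∑ j ∈ range q, (j:ℤ) * (if (f+1)*c+1 ≤ j then (1:ℤ) else 0)) := fun _ _ => rfl
    have hK : ∀ f ∈ range c, (f+1)*c+1 ≤ q := by
      intro f hf
      simp only [mem_range] at hf
      have : (f+1)*c ≤ c*c := Nat.mul_le_mul_right c (by omega)
      omega
    have h2W : ∀ f ∈ range c,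
        2 * (∑ j ∈ range q, (j:ℤ) * (if (f+1)*c+1 ≤ j then (1:ℤ) else 0))
          = (q:ℤ)*((q:ℤ)-1) - (((f+1)*c+1 : ℕ) : ℤ)*((((f+1)*c+1 : ℕ) : ℤ)-1) :=
      fun f hf => sum_id_ind q ((f+1)*c+1) (hK f hf)
    have h12 : 12 * (∑ f ∈ range c, ∑ j ∈ range q, (j:ℤ) * (if (f+1)*c+1 ≤ j then (1:ℤ) else 0))
        = 6 * ∑ f ∈ range c, ((q:ℤ)*((q:ℤ)-1)
            - (((f+1)*c+1 : ℕ) : ℤ)*((((f+1)*c+1 : ℕ) : ℤ)-1)) := by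
      rw [Finset.mul_sum, Finset.mul_sum]
      refine Finset.sum_congr rfl fun f hf => ?_
      have := h2W f hf
      linarith
    rw [h12]
    have hexp : ∀ f ∈ range c, ((q:ℤ)*((q:ℤ)-1)
        - (((f+1)*c+1 : ℕ) : ℤ)*((((f+1)*c+1 : ℕ) : ℤ)-1))
        = (q:ℤ)*((q:ℤ)-1) - ((c:ℤ)^2*((f:ℤ)+1)^2 + (c:ℤ)*((f:ℤ)+1)) := by
      intro f _
      push_cast
      ring
    rw [Finset.sum_congr rfl hexp]
    rw [Finset.sum_sub_distrib, Finset.sum_const, card_range, nsmul_eq_mul,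
      Finset.sum_add_distrib, ← Finset.mul_sum, ← Finset.mul_sum]
    have hs1 : (∑ f ∈ range c, ((f:ℤ)+1)) = ∑ i ∈ range (c+1), (i:ℤ) := by
      rw [Finset.sum_range_succ' (fun i => (i:ℤ)) c]
      push_cast
      simp
    have hs2 : (∑ f ∈ range c, ((f:ℤ)+1)^2) = ∑ i ∈ range (c+1), (i:ℤ)^2 := by
      rw [Finset.sum_range_succ' (fun i => (i:ℤ)^2) c]
      push_cast
      simp
    rw [hs1, hs2]
    have hg1 := gauss1 (c+1)
    have hg2 := gauss2 (c+1)
    push_cast at hg1 hg2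
    linear_combination (-(c:ℤ)^2) * hg2 + (-3*(c:ℤ)) * hg1
  -- Final assembly
  have hg1b := gauss1 b
  have hg1q := gauss1 q
  have hg2q := gauss2 q
  have hSS : 4 * ((∑ v ∈ range b, (v:ℤ)) * (∑ t ∈ range q, (t:ℤ)))
      = ((b:ℤ)*((b:ℤ)-1)) * ((q:ℤ)*((q:ℤ)-1)) := by
    linear_combination (2 * ∑ t ∈ range q, (t:ℤ)) * hg1b + ((b:ℤ)*((b:ℤ)-1)) * hg1q
  have hS2 : 4 * ((∑ v ∈ range b, (v:ℤ))^2) = ((b:ℤ)*((b:ℤ)-1))^2 := by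
    linear_combination (2 * (∑ v ∈ range b, (v:ℤ)) + (b:ℤ)*((b:ℤ)-1)) * hg1b
  have hQ : (q:ℤ) = ((b:ℤ)*(m:ℤ))^2 + 1 := by rw [hqc, hcz]; ring
  simp only [hcz, hQ] at hTsplit hSkr hSku hT2 hE2 hSJH hW' hSS hS2 hg1q hg2q ⊢
  linear_combination (12:ℤ)*hTsplit + 12*(((b:ℤ)*(m:ℤ))^2 + 1)*hSkr + 12*(b:ℤ)*hSku
    + 12*(b:ℤ)^2*hT2 - 12*(b:ℤ)*(((b:ℤ)*(m:ℤ))^2 + 1)*hE2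
    - 12*(b:ℤ)*(((b:ℤ)*(m:ℤ))^2 + 1)*hSJH + 6*(b:ℤ)*(((b:ℤ)*(m:ℤ))^2 + 1)*hSS
    - 3*(b:ℤ)*(((b:ℤ)*(m:ℤ))^2 + 1)^2*(m:ℤ)^2*hS2 + 2*(b:ℤ)^2*(m:ℤ)*hg2q
    - (b:ℤ)*(((b:ℤ)*(m:ℤ))^2 + 1)*hW'

/- ## Combining -/

theorem key_gcd (a : ℤ) (b m c q : ℕ) (hgcd : Int.gcd a b = 1)
    (hc : c = b * m) (hq : q = c * c + 1) :
    Int.gcd (a * q + c) (b * q) = 1 := by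
  have hco : IsCoprime a (b:ℤ) := Int.isCoprime_iff_gcd_eq_one.mpr hgcd
  obtain ⟨u, v, huv⟩ := hco
  rw [← Int.isCoprime_iff_gcd_eq_one]
  have hcz : (c:ℤ) = (b:ℤ) * (m:ℤ) := by exact_mod_cast hc
  have hqz : (q:ℤ) = (b:ℤ)^2 * (m:ℤ)^2 + 1 := by
    have : (q:ℤ) = (c:ℤ) * (c:ℤ) + 1 := by exact_mod_cast hq
    rw [this, hcz]; ring
  refine ⟨u * q - c, -((b:ℤ) * (m:ℤ)^2 + (u - a) * (m:ℤ) - v * q), ?_⟩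
  have hbq : ((b * q : ℕ) : ℤ) = (b:ℤ) * (q:ℤ) := by push_cast; ring
  rw [hqz, hcz]
  linear_combination ((b:ℤ)^2 * (m:ℤ)^2 + 1)^2 * huv

theorem key (a : ℤ) (b m c q : ℕ) (hb : 0 < b) (hgcd : Int.gcd a b = 1)
    (hc : c = b * m) (hq : q = c * c + 1) :
    normDedekindSum (a * q + c) (b * q) = normDedekindSum a b := by
  have hco : IsCoprime a (b:ℤ) := Int.isCoprime_iff_gcd_eq_one.mpr hgcd
  have hcoAB : IsCoprime (a * q + c : ℤ) ((b * q : ℕ) : ℤ) :=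
    Int.isCoprime_iff_gcd_eq_one.mpr (key_gcd a b m c q hgcd hc hq)
  have hq0 : 0 < q := by omega
  have hB : 0 < b * q := Nat.mul_pos hb hq0
  have h1 := norm_eq (a * q + c) (b * q) hB hcoAB
  have h2 := norm_eq a b hb hco
  have h3 := key_int a b m c q hb hco hc hq
  have h3R : (12 : ℝ) * (Tsum (a * q + c) (b * q) : ℝ)
      = (q:ℝ)^2 * (12 * (Tsum a b : ℝ)) + 3 * (b:ℝ)^3 * (q:ℝ)^2 * ((q:ℝ) - 1) := by
    exact_mod_cast congrArg (fun z : ℤ => (z : ℝ)) h3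
  push_cast at h1
  have key2 : ((b:ℝ) * (q:ℝ))^2 * normDedekindSum (a * q + c) (b * q)
      = ((b:ℝ) * (q:ℝ))^2 * normDedekindSum a b := by
    linear_combination h1 - (q:ℝ)^2 * h2 + h3R
  have hne : ((b:ℝ) * (q:ℝ))^2 ≠ 0 := by positivity
  exact mul_left_cancel₀ hne key2

lemma norm_zero_zero (a : ℤ) : normDedekindSum a 0 = 0 := by
  unfold normDedekindSum dedekindSum
  rw [show Finset.Icc 1 0 = (∅ : Finset ℕ) by rfl]
  simp

lemma norm_one_one : normDedekindSum 1 1 = 0 := by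
  unfold normDedekindSum dedekindSum
  rw [show Finset.Icc 1 1 = ({1} : Finset ℕ) by rfl]
  simp only [Finset.sum_singleton]
  rw [show ((1:ℕ):ℝ)/((1:ℕ):ℝ) = ((1:ℤ):ℝ) by norm_num,
      show ((1:ℤ):ℝ)*((1:ℕ):ℝ)/((1:ℕ):ℝ) = ((1:ℤ):ℝ) by norm_num, saw_intCast]
  ring

end DSum

theorem value_attained_infinitely_often (r : ℚ) (a : ℤ) (b : ℕ)
    (h : Int.gcd a b = 1) (hr : normDedekindSum a b = (r : ℝ)) :
    ∃ (A : ℕ → ℤ) (B : ℕ → ℕ),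
      (∀ i, Int.gcd (A i) (B i) = 1) ∧
      Filter.Tendsto B Filter.atTop Filter.atTop ∧
      ∀ i, normDedekindSum (A i) (B i) = (r : ℝ) := by
  -- reduce to the case `0 < b`
  obtain ⟨a₀, b₀, hb₀, hg₀, hr₀⟩ :
      ∃ (a₀ : ℤ) (b₀ : ℕ), 0 < b₀ ∧ Int.gcd a₀ b₀ = 1 ∧ normDedekindSum a₀ b₀ = (r : ℝ) := by
    rcases Nat.eq_zero_or_pos b with hb | hb
    · subst hb
      refine ⟨1, 1, one_pos, by simp, ?_⟩
      rw [DSum.norm_one_one, ← hr, DSum.norm_zero_zero]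
    · exact ⟨a, b, hb, h, hr⟩
  refine ⟨fun i => a₀ * ((b₀ * (i+1)) * (b₀ * (i+1)) + 1 : ℕ) + (b₀ * (i+1) : ℕ),
          fun i => b₀ * ((b₀ * (i+1)) * (b₀ * (i+1)) + 1), ?_, ?_, ?_⟩
  · intro i
    exact DSum.key_gcd a₀ b₀ (i+1) _ _ hg₀ rfl rfl
  · apply Filter.tendsto_atTop_mono (f := fun i => i)
    · intro i
      have h0 : i + 1 ≤ b₀ * (i+1) := Nat.le_mul_of_pos_left _ hb₀
      have h1 : i + 1 ≤ (b₀ * (i+1)) * (b₀ * (i+1)) + 1 := by nlinarith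
      calc i ≤ i + 1 := by omega
        _ ≤ (b₀ * (i+1)) * (b₀ * (i+1)) + 1 := h1
        _ ≤ b₀ * ((b₀ * (i+1)) * (b₀ * (i+1)) + 1) := Nat.le_mul_of_pos_left _ hb₀
    · exact Filter.tendsto_id
  · intro i
    rw [DSum.key a₀ b₀ (i+1) _ _ hb₀ hg₀ rfl rfl, hr₀]
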